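/- Let φ and ψ be real-valued Schwartz functions on ℝ². Then ∫_{[0,1]²} Σ_{m∈ℤ²} ⟨f, Tran_{y+m}φ⟩ Tran_{y+m}ψ dy = f * Φ, where Φ(x) = ∬ conj(φ(u)) ψ(x+u) du, and in particular the Fourier transform of Φ equals conj(φ̂)·ψ̂. -/

import Mathlib

open MeasureTheory Complex
open scoped FourierTransform RealInnerProductSpace

noncomputable section

namespace AveragedTranslatesAux

abbrev E2 := EuclideanSpace ℝ (Fin 2)
abbrev bE : Module.Basis (Fin 2) ℝ E2 := (EuclideanSpace.basisFun (Fin 2) ℝ).toBasis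
abbrev latE := Submodule.span ℤ (Set.range (bE : Fin 2 → E2))
abbrev eqv : (Fin 2 → ℤ) ≃ latE := ((bE.restrictScalars ℤ).equivFun).toEquiv.symm

instance : MeasurableVAdd latE E2 := by
  constructor
  · intro x
    show Measurable fun g : latE => (g : E2) + x
    exact (measurable_subtype_coe.add_const x)

instance : VAddInvariantMeasure latE E2 (volume : Measure E2) := by
  constructor
  intro c s hs
  show volume ((fun y : E2 => (c : E2) + y) ⁻¹' s) = volume s
  exact measure_preimage_add volume _ s

lemma eqv_coe (m : Fin 2 → ℤ) : ((eqv m : latE) : E2) = WithLp.toLp 2 (fun i => (m i : ℝ) : Fin 2 → ℝ) := by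
  show ((((bE.restrictScalars ℤ).equivFun).symm m : latE) : E2) = _
  rw [Module.Basis.equivFun_symm_apply, AddSubmonoidClass.coe_finset_sum]
  ext j
  have h : ∀ i, ((m i • (bE.restrictScalars ℤ) i : latE) : E2) = m i • bE i := by
    intro i; rw [← Module.Basis.restrictScalars_apply ℤ bE i]; push_cast; rfl
  show (∑ i, ((m i • (bE.restrictScalars ℤ) i : latE) : E2)) j = _
  simp only [h]
  rw [WithLp.ofLp_sum, Finset.sum_apply]
  simp [EuclideanSpace.single_apply]

lemma hyperplane_null (i : Fin 2) (a : ℝ) : (volume : Measure E2) {y : E2 | y i = a} = 0 := by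
  have hmp := EuclideanSpace.volume_preserving_symm_measurableEquiv_toLp (Fin 2)
  have h : {y : E2 | y i = a} = (MeasurableEquiv.toLp 2 (Fin 2 → ℝ)).symm ⁻¹' {f : Fin 2 → ℝ | f i = a} := rfl
  rw [h, hmp.measure_preimage]
  · have h2 : (volume : Measure (Fin 2 → ℝ)) = Measure.pi fun _ => volume := rfl
    rw [h2, Measure.pi_hyperplane]
  · exact (measurableSet_eq_fun (measurable_pi_apply i) measurable_const).nullMeasurableSet

lemma icc_ae_ico :
    ({y : E2 | ∀ i, y i ∈ Set.Icc (0:ℝ) 1} : Set E2) =ᵐ[volume] {y : E2 | ∀ i, y i ∈ Set.Ico (0:ℝ) 1} := by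
  have hsub : ({y : E2 | ∀ i, y i ∈ Set.Icc (0:ℝ) 1} \ {y : E2 | ∀ i, y i ∈ Set.Ico (0:ℝ) 1})
      ⊆ ⋃ i, {y : E2 | y i = 1} := by
    rintro y ⟨h1, h2⟩
    simp only [Set.mem_setOf_eq, not_forall, Set.mem_Ico] at h2
    obtain ⟨i, hi⟩ := h2
    have hy := h1 i
    simp only [Set.mem_Icc] at hy
    refine Set.mem_iUnion.2 ⟨i, ?_⟩
    rcases lt_or_eq_of_le hy.2 with h | h
    · exact absurd ⟨hy.1, h⟩ hi
    · exact h
  have h2 : ({y : E2 | ∀ i, y i ∈ Set.Ico (0:ℝ) 1} \ {y : E2 | ∀ i, y i ∈ Set.Icc (0:ℝ) 1}) = ∅ := by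
    ext y; simp only [Set.mem_diff, Set.mem_setOf_eq, Set.mem_empty_iff_false, iff_false]
    rintro ⟨h1, h2⟩
    exact h2 fun i => ⟨(h1 i).1, le_of_lt (h1 i).2⟩
  refine MeasureTheory.ae_eq_set.2 ⟨?_, ?_⟩
  · exact measure_mono_null hsub (measure_iUnion_null fun i => hyperplane_null i 1)
  · rw [h2]; simp

lemma unfold (F : E2 → ℂ) (hF : Integrable F) (hFc : Continuous F) :
    (∫ y in {y : E2 | ∀ i, y i ∈ Set.Icc (0:ℝ) 1},
      ∑' m : Fin 2 → ℤ, F (y + (show E2 from WithLp.toLp 2 fun i => (m i : ℝ)))) = ∫ y, F y := by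
  have hfd : ZSpan.fundamentalDomain bE = {y : E2 | ∀ i, y i ∈ Set.Ico (0:ℝ) 1} := by
    ext y; simp [ZSpan.fundamentalDomain]
  have hA := ZSpan.isAddFundamentalDomain bE (volume : Measure E2)
  rw [hfd] at hA
  have htsum : ∀ y : E2, (∑' m : Fin 2 → ℤ, F (y + (show E2 from WithLp.toLp 2 fun i => (m i : ℝ))))
      = ∑' g : latE, F (g +ᵥ y) := by
    intro y
    rw [← eqv.tsum_eq (fun g : latE => F (g +ᵥ y))]
    refine tsum_congr fun m => ?_
    have h : (eqv m : latE) +ᵥ y = y + (show E2 from WithLp.toLp 2 fun i => (m i : ℝ)) := by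
      show ((eqv m : latE) : E2) + y = _
      rw [eqv_coe, add_comm]
    rw [h]
  simp only [htsum]
  rw [setIntegral_congr_set icc_ae_ico]
  have hmeas : ∀ g : latE, AEStronglyMeasurable (fun y => F (g +ᵥ y))
      ((volume : Measure E2).restrict {y : E2 | ∀ i, y i ∈ Set.Ico (0:ℝ) 1}) := by
    intro g
    exact (hFc.comp (by continuity : Continuous fun y : E2 => (g : E2) + y)).aestronglyMeasurable
  have hlint := hA.lintegral_eq_tsum'' (fun y => (‖F y‖₊ : ENNReal))
  have hfin : (∑' g : latE, ∫⁻ y in {y : E2 | ∀ i, y i ∈ Set.Ico (0:ℝ) 1}, (‖F (g +ᵥ y)‖₊ : ENNReal)) ≠ ⊤ := by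
    rw [← hlint]
    exact hF.2.ne
  rw [integral_tsum hmeas hfin]
  exact (hA.integral_eq_tsum'' F hF).symm

lemma conj_fc (r : ℝ) : (starRingEnd ℂ) (𝐞 r : ℂ) = (𝐞 (-r) : ℂ) := by
  simp only [Real.fourierChar_apply, ← Complex.exp_conj, map_mul, map_ofNat, Complex.conj_I,
    Complex.conj_ofReal, map_neg]
  push_cast
  ring_nf

lemma four_shift (f : E2 → ℂ) (u : E2) (ξ : E2) :
    𝓕 (fun x => f (x + u)) ξ = (𝐞 (⟪u, ξ⟫) : ℂ) * 𝓕 f ξ := by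
  have h := VectorFourier.fourierIntegral_comp_add_right (𝐞) (volume : Measure E2)
    (innerₗ E2) f u
  have h2 : 𝓕 (fun x => f (x + u)) = VectorFourier.fourierIntegral 𝐞 volume (innerₗ E2) (f ∘ fun v => v + u) := rfl
  rw [h2, h]
  simp [Circle.smul_def]
  rfl


section P1
open scoped Convolution
variable (φ ψ : SchwartzMap E2 ℝ) (f : SchwartzMap E2 ℂ)

lemma c_eq_conv :
    (fun t : E2 => ∫ z, f z * ((φ (z - t) : ℝ) : ℂ))
      = convolution (⇑f) (fun t : E2 => ((φ (-t) : ℝ) : ℂ)) (ContinuousLinearMap.mul ℝ ℂ) volume := by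
  funext t
  rw [convolution_def]
  congr 1
  funext z
  simp [neg_sub]

lemma c_cont : Continuous (fun t : E2 => ∫ z, f z * ((φ (z - t) : ℝ) : ℂ)) := by
  rw [c_eq_conv φ f]
  refine BddAbove.continuous_convolution_right_of_integrable _ ?_ f.integrable ?_
  · refine ⟨SchwartzMap.seminorm ℝ 0 0 φ, ?_⟩
    rintro - ⟨t, rfl⟩
    simpa using φ.norm_le_seminorm ℝ (-t)
  · exact Complex.continuous_ofReal.comp (φ.continuous.comp continuous_neg)

lemma c_bdd (t : E2) : ‖∫ z, f z * ((φ (z - t) : ℝ) : ℂ)‖ ≤ (∫ z, ‖f z‖) * SchwartzMap.seminorm ℝ 0 0 φ := by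
  calc ‖∫ z, f z * ((φ (z - t) : ℝ) : ℂ)‖ ≤ ∫ z, ‖f z * ((φ (z - t) : ℝ) : ℂ)‖ :=
        norm_integral_le_integral_norm _
    _ ≤ ∫ z, ‖f z‖ * SchwartzMap.seminorm ℝ 0 0 φ := by
        refine integral_mono_of_nonneg (Filter.Eventually.of_forall fun z => norm_nonneg _)
          (f.integrable.norm.mul_const _) (Filter.Eventually.of_forall fun z => ?_)
        show ‖f z * ((φ (z - t) : ℝ) : ℂ)‖ ≤ ‖f z‖ * SchwartzMap.seminorm ℝ 0 0 φ
        rw [norm_mul]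
        refine mul_le_mul_of_nonneg_left ?_ (norm_nonneg _)
        simpa using φ.norm_le_seminorm ℝ (z - t)
    _ = (∫ z, ‖f z‖) * SchwartzMap.seminorm ℝ 0 0 φ := integral_mul_const _ _

lemma F_integrable (x : E2) :
    Integrable (fun t : E2 => (∫ z, f z * ((φ (z - t) : ℝ) : ℂ)) * ((ψ (x - t) : ℝ) : ℂ)) := by
  refine Integrable.bdd_mul ?_ (c_cont φ f).aestronglyMeasurable (Filter.Eventually.of_forall (c_bdd φ f))
  exact (ψ.integrable.ofReal (𝕜 := ℂ)).comp_sub_left x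

lemma part1 (x : E2) :
    (∫ y, (∫ z, f z * ((φ (z - y) : ℝ) : ℂ)) * ((ψ (x - y) : ℝ) : ℂ))
      = ∫ z, f z * ∫ u, ((φ u : ℝ) : ℂ) * ((ψ ((x - z) + u) : ℝ) : ℂ) := by
  have hint : Integrable (Function.uncurry fun y z : E2 =>
      f z * ((φ (z - y) : ℝ) : ℂ) * ((ψ (x - y) : ℝ) : ℂ)) ((volume : Measure E2).prod volume) := by
    have hbound : Integrable (fun p : E2 × E2 =>
        ((SchwartzMap.seminorm ℝ 0 0 φ : ℝ) * ‖((ψ (x - p.1) : ℝ) : ℂ)‖) * ‖f p.2‖)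
        ((volume : Measure E2).prod volume) := by
      refine Integrable.mul_prod (μ := (volume : Measure E2)) (ν := (volume : Measure E2))
        (f := fun y : E2 => (SchwartzMap.seminorm ℝ 0 0 φ : ℝ) * ‖((ψ (x - y) : ℝ) : ℂ)‖)
        (g := fun z : E2 => ‖f z‖) ?_ f.integrable.norm
      exact (((ψ.integrable.ofReal (𝕜 := ℂ)).comp_sub_left x).norm.const_mul _)
    refine hbound.mono' ?_ (Filter.Eventually.of_forall fun p => ?_)
    · refine Continuous.aestronglyMeasurable ?_
      refine ((f.continuous.comp continuous_snd).mul ?_).mul ?_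
      · exact Complex.continuous_ofReal.comp (φ.continuous.comp (continuous_snd.sub continuous_fst))
      · exact Complex.continuous_ofReal.comp (ψ.continuous.comp (continuous_const.sub continuous_fst))
    · obtain ⟨y, z⟩ := p
      simp only [Function.uncurry, norm_mul]
      calc ‖f z‖ * ‖((φ (z - y) : ℝ) : ℂ)‖ * ‖((ψ (x - y) : ℝ) : ℂ)‖
          ≤ ‖f z‖ * (SchwartzMap.seminorm ℝ 0 0 φ) * ‖((ψ (x - y) : ℝ) : ℂ)‖ := by
            refine mul_le_mul_of_nonneg_right (mul_le_mul_of_nonneg_left ?_ (norm_nonneg _)) (norm_nonneg _)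
            simpa using φ.norm_le_seminorm ℝ (z - y)
        _ = (SchwartzMap.seminorm ℝ 0 0 φ * ‖((ψ (x - y) : ℝ) : ℂ)‖) * ‖f z‖ := by ring
  calc (∫ y, (∫ z, f z * ((φ (z - y) : ℝ) : ℂ)) * ((ψ (x - y) : ℝ) : ℂ))
      = ∫ y, ∫ z, f z * ((φ (z - y) : ℝ) : ℂ) * ((ψ (x - y) : ℝ) : ℂ) := by
        refine integral_congr_ae (Filter.Eventually.of_forall fun y => ?_)
        exact (integral_mul_const _ _).symm
    _ = ∫ z, ∫ y, f z * ((φ (z - y) : ℝ) : ℂ) * ((ψ (x - y) : ℝ) : ℂ) :=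
        integral_integral_swap hint
    _ = ∫ z, f z * ∫ u, ((φ u : ℝ) : ℂ) * ((ψ ((x - z) + u) : ℝ) : ℂ) := by
        refine integral_congr_ae (Filter.Eventually.of_forall fun z => ?_)
        have h1 : ∀ y : E2, f z * ((φ (z - y) : ℝ) : ℂ) * ((ψ (x - y) : ℝ) : ℂ)
            = f z * (((φ (z - y) : ℝ) : ℂ) * ((ψ (x - y) : ℝ) : ℂ)) := fun y => by ring
        simp only [h1]
        rw [integral_const_mul]
        congr 1
        have h2 := integral_sub_left_eq_self
          (fun u : E2 => ((φ u : ℝ) : ℂ) * ((ψ ((x - z) + u) : ℝ) : ℂ)) volume z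
        rw [← h2]
        refine integral_congr_ae (Filter.Eventually.of_forall fun y => ?_)
        have h3 : (x - z) + (z - y) = x - y := by abel
        show ((φ (z - y) : ℝ) : ℂ) * ((ψ (x - y) : ℝ) : ℂ) = ((φ (z - y) : ℝ) : ℂ) * ((ψ ((x - z) + (z - y)) : ℝ) : ℂ)
        rw [h3]

lemma part2 (ξ : E2) :
    𝓕 (fun x => ∫ u, ((φ u : ℝ) : ℂ) * ((ψ (x + u) : ℝ) : ℂ)) ξ
      = (starRingEnd ℂ) (𝓕 (fun v => ((φ v : ℝ) : ℂ)) ξ) * 𝓕 (fun v => ((ψ v : ℝ) : ℂ)) ξ := by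
  have hcont_phase : Continuous fun q : E2 × E2 => (𝐞 (-⟪q.2 - q.1, ξ⟫) : ℂ) := by
    refine continuous_subtype_val.comp (Real.continuous_fourierChar.comp ?_)
    exact ((continuous_snd.sub continuous_fst).inner continuous_const).neg
  have hK : Integrable (fun q : E2 × E2 =>
      (𝐞 (-⟪q.2 - q.1, ξ⟫) : ℂ) * (((φ q.1 : ℝ) : ℂ) * ((ψ q.2 : ℝ) : ℂ)))
      ((volume : Measure E2).prod volume) := by
    refine Integrable.bdd_mul ?_ hcont_phase.aestronglyMeasurable (c := 1) (Filter.Eventually.of_forall fun q => (Circle.norm_coe _).le)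
    exact Integrable.mul_prod (μ := (volume : Measure E2)) (ν := (volume : Measure E2))
      (φ.integrable.ofReal (𝕜 := ℂ)) (ψ.integrable.ofReal (𝕜 := ℂ))
  have hS : MeasurePreserving (fun z : E2 × E2 => (z.1, z.1 + z.2))
      ((volume : Measure E2).prod volume) ((volume : Measure E2).prod volume) :=
    measurePreserving_prod_add volume volume
  have hemb : MeasurableEmbedding (fun z : E2 × E2 => (z.1, z.1 + z.2)) :=
    (MeasurableEquiv.shearAddRight E2).measurableEmbedding
  have hcomp := (hS.integrable_comp_emb hemb).2 hK
  have hG' : Integrable (fun p : E2 × E2 =>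
      (𝐞 (-⟪p.2, ξ⟫) : ℂ) * (((φ p.1 : ℝ) : ℂ) * ((ψ (p.2 + p.1) : ℝ) : ℂ)))
      ((volume : Measure E2).prod volume) := by
    refine hcomp.congr (Filter.Eventually.of_forall fun p => ?_)
    show (𝐞 (-⟪p.1 + p.2 - p.1, ξ⟫) : ℂ) * (((φ p.1 : ℝ) : ℂ) * ((ψ (p.1 + p.2) : ℝ) : ℂ)) = _
    rw [add_sub_cancel_left, add_comm p.1 p.2]
  have hint : Integrable (Function.uncurry fun x u : E2 =>
      (𝐞 (-⟪x, ξ⟫) : ℂ) * (((φ u : ℝ) : ℂ) * ((ψ (x + u) : ℝ) : ℂ)))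
      ((volume : Measure E2).prod volume) := hG'.swap
  calc 𝓕 (fun x => ∫ u, ((φ u : ℝ) : ℂ) * ((ψ (x + u) : ℝ) : ℂ)) ξ
      = ∫ x, (𝐞 (-⟪x, ξ⟫) : Circle) • ∫ u, ((φ u : ℝ) : ℂ) * ((ψ (x + u) : ℝ) : ℂ) :=
        Real.fourier_eq _ _
    _ = ∫ x, ∫ u, (𝐞 (-⟪x, ξ⟫) : ℂ) * (((φ u : ℝ) : ℂ) * ((ψ (x + u) : ℝ) : ℂ)) := by
        refine integral_congr_ae (Filter.Eventually.of_forall fun x => ?_)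
        show (𝐞 (-⟪x, ξ⟫) : Circle) • (∫ u, ((φ u : ℝ) : ℂ) * ((ψ (x + u) : ℝ) : ℂ))
          = ∫ u, (𝐞 (-⟪x, ξ⟫) : ℂ) * (((φ u : ℝ) : ℂ) * ((ψ (x + u) : ℝ) : ℂ))
        rw [Circle.smul_def, smul_eq_mul, ← integral_const_mul]
    _ = ∫ u, ∫ x, (𝐞 (-⟪x, ξ⟫) : ℂ) * (((φ u : ℝ) : ℂ) * ((ψ (x + u) : ℝ) : ℂ)) :=
        integral_integral_swap hint
    _ = ∫ u, ((φ u : ℝ) : ℂ) * ((𝐞 (⟪u, ξ⟫) : ℂ) * 𝓕 (fun v => ((ψ v : ℝ) : ℂ)) ξ) := by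
        refine integral_congr_ae (Filter.Eventually.of_forall fun u => ?_)
        have h1 : ∀ x : E2, (𝐞 (-⟪x, ξ⟫) : ℂ) * (((φ u : ℝ) : ℂ) * ((ψ (x + u) : ℝ) : ℂ))
            = ((φ u : ℝ) : ℂ) * ((𝐞 (-⟪x, ξ⟫) : ℂ) * ((ψ (x + u) : ℝ) : ℂ)) := fun x => by ring
        simp only [h1]
        rw [integral_const_mul]
        congr 1
        have h2 := Real.fourier_eq (fun x : E2 => ((ψ (x + u) : ℝ) : ℂ)) ξ
        simp only [Circle.smul_def, smul_eq_mul] at h2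
        rw [← h2]
        exact four_shift (fun v => ((ψ v : ℝ) : ℂ)) u ξ
    _ = (∫ u, ((φ u : ℝ) : ℂ) * (𝐞 (⟪u, ξ⟫) : ℂ)) * 𝓕 (fun v => ((ψ v : ℝ) : ℂ)) ξ := by
        simp only [← mul_assoc]
        rw [integral_mul_const]
    _ = (starRingEnd ℂ) (𝓕 (fun v => ((φ v : ℝ) : ℂ)) ξ) * 𝓕 (fun v => ((ψ v : ℝ) : ℂ)) ξ := by
        congr 1
        rw [Real.fourier_eq, ← integral_conj]
        refine integral_congr_ae (Filter.Eventually.of_forall fun u => ?_)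
        show ((φ u : ℝ) : ℂ) * (𝐞 (⟪u, ξ⟫) : ℂ)
          = (starRingEnd ℂ) ((𝐞 (-⟪u, ξ⟫) : Circle) • ((φ u : ℝ) : ℂ))
        rw [Circle.smul_def, smul_eq_mul, map_mul, conj_fc, neg_neg, Complex.conj_ofReal, mul_comm]

end P1

end AveragedTranslatesAux

open AveragedTranslatesAux

/-- The averaged wave-packet reproducing identity: for real-valued Schwartz `φ, ψ` on `ℝ²`
and Schwartz `f`,
`∫_{[0,1]²} ∑_{m ∈ ℤ²} ⟨f, Tran_{y+m} φ⟩ Tran_{y+m} ψ dy = f * Φ` pointwise, where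
`Φ(x) = ∬ conj(φ(u)) ψ(x+u) du`; in particular `Φ̂ = conj(φ̂) ψ̂`. -/
theorem averaged_translates_eq_convolution
    (φ ψ : SchwartzMap (EuclideanSpace ℝ (Fin 2)) ℝ)
    (f : SchwartzMap (EuclideanSpace ℝ (Fin 2)) ℂ) :
    (∀ x : EuclideanSpace ℝ (Fin 2),
      (∫ y in {y : EuclideanSpace ℝ (Fin 2) | ∀ i, y i ∈ Set.Icc (0 : ℝ) 1},
        ∑' m : Fin 2 → ℤ,
          (∫ z, f z * (starRingEnd ℂ) ((φ (z - (y + (show EuclideanSpace ℝ (Fin 2) from WithLp.toLp 2 fun i => (m i : ℝ)))) : ℝ) : ℂ)) *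
            ((ψ (x - (y + (show EuclideanSpace ℝ (Fin 2) from WithLp.toLp 2 fun i => (m i : ℝ)))) : ℝ) : ℂ))
      = ∫ z, f z *
          (∫ u, (starRingEnd ℂ) ((φ u : ℝ) : ℂ) * ((ψ ((x - z) + u) : ℝ) : ℂ))) ∧
    (∀ ξ : EuclideanSpace ℝ (Fin 2),
      𝓕 (fun x => ∫ u, (starRingEnd ℂ) ((φ u : ℝ) : ℂ) * ((ψ (x + u) : ℝ) : ℂ)) ξ
        = (starRingEnd ℂ) (𝓕 (fun v => ((φ v : ℝ) : ℂ)) ξ) *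
            𝓕 (fun v => ((ψ v : ℝ) : ℂ)) ξ) := by
  constructor
  · intro x
    simp only [Complex.conj_ofReal]
    have hc : Continuous (fun t : E2 =>
        (∫ z, f z * ((φ (z - t) : ℝ) : ℂ)) * ((ψ (x - t) : ℝ) : ℂ)) :=
      (c_cont φ f).mul
        (Complex.continuous_ofReal.comp (ψ.continuous.comp (continuous_const.sub continuous_id)))
    exact (unfold (fun t : E2 => (∫ z, f z * ((φ (z - t) : ℝ) : ℂ)) * ((ψ (x - t) : ℝ) : ℂ))
      (F_integrable φ ψ f x) hc).trans (part1 φ ψ f x)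
  · intro ξ
    simp only [Complex.conj_ofReal]
    exact part2 φ ψ ξ

end
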